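/- For two coprime integers a, b ≥ 2 and every integer m ≥ 1, S_{m−1} = (1/(m(m+1)))·∑_{i=0}^{m} ∑_{j=0}^{m−i} C(m+1,i)·C(m+1−i,j)·B_i·B_j·a^{m−j}·b^{m−i} − B_m/m (Rödseth's formula), where B_i denotes the i-th Bernoulli number. -/

import Mathlib

open Finset

lemma tele (m : ℕ) (z : ℚ) : ∀ K : ℕ,
    (m : ℚ) * ∑ k ∈ range K, (z + k) ^ (m - 1) =
      (Polynomial.bernoulli m).eval (z + K) - (Polynomial.bernoulli m).eval z := by
  intro K
  induction K with
  | zero => simp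
  | succ K ih =>
    rw [sum_range_succ, mul_add, ih, Nat.cast_succ, ← add_assoc, ← add_comm 1 (z + K),
      Polynomial.bernoulli_eval_one_add]
    ring
lemma bernoulli_eval (n : ℕ) (t : ℚ) :
    (Polynomial.bernoulli n).eval t =
      ∑ i ∈ range (n + 1), bernoulli i * (n.choose i : ℚ) * t ^ (n - i) := by
  simp [Polynomial.bernoulli, Polynomial.eval_finset_sum]

lemma tri_eq (n : ℕ) (f : ℕ → ℕ → ℚ) :
    ∑ i ∈ range (n + 1), ∑ j ∈ range (n - i + 1), f i j =
      ∑ p ∈ (range (n + 1) ×ˢ range (n + 1)).filter (fun p => p.1 + p.2 ≤ n), f p.1 p.2 := by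
  rw [Finset.sum_filter, Finset.sum_product]
  refine Finset.sum_congr rfl fun i hi => ?_
  rw [← Finset.sum_filter]
  refine (Finset.sum_congr ?_ fun _ _ => rfl).symm
  ext j
  simp only [Finset.mem_filter, Finset.mem_range] at *
  omega
lemma triangle_swap (n : ℕ) (f : ℕ → ℕ → ℚ) :
    ∑ i ∈ range (n + 1), ∑ j ∈ range (n - i + 1), f i j =
      ∑ i ∈ range (n + 1), ∑ j ∈ range (n - i + 1), f j i := by
  rw [tri_eq, tri_eq]
  refine Finset.sum_nbij' Prod.swap Prod.swap ?_ ?_ ?_ ?_ ?_ <;>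
    simp_all [Nat.add_comm]
lemma choose_sym (n i j : ℕ) (h : i + j ≤ n) :
    n.choose i * (n - i).choose j = n.choose j * (n - j).choose i := by
  have h1 := Nat.choose_mul (n := n) (k := i + j) (s := i) (Nat.le_add_right i j)
  have h2 := Nat.choose_mul (n := n) (k := i + j) (s := j) (Nat.le_add_left j i)
  rw [Nat.add_sub_cancel_left] at h1
  rw [Nat.add_sub_cancel] at h2
  rw [Nat.choose_symm_add] at h1
  omega
noncomputable def Gsum (m c b : ℕ) : ℚ :=
  ∑ i ∈ range (m + 1), ∑ j ∈ range (m - i + 1),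
    ((m + 1).choose i : ℚ) * ((m + 1 - i).choose j : ℚ) *
      bernoulli i * bernoulli j * (c : ℚ) ^ (m - i) * (b : ℚ) ^ (m - j) / (m + 1)

-- coefficient symmetry, cast version
lemma coeff_sym (m i j : ℕ) (h : i + j ≤ m) :
    ((m + 1).choose j : ℚ) * ((m + 1 - j).choose i : ℚ) =
      ((m + 1).choose i : ℚ) * ((m + 1 - i).choose j : ℚ) := by
  have := choose_sym (m + 1) j i (by omega)
  exact_mod_cast congrArg (Nat.cast (R := ℚ)) this

lemma lemA (m c b : ℕ) (hb : 0 < b) (hm : 1 ≤ m) :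
    (b : ℚ) ^ (m - 1) * ∑ x ∈ range b, (Polynomial.bernoulli m).eval ((c * x : ℕ) / (b : ℚ)) =
      Gsum m c b := by
  have hbQ : (b : ℚ) ≠ 0 := Nat.cast_ne_zero.mpr hb.ne'
  have step1 : ∀ x : ℕ, (Polynomial.bernoulli m).eval ((c * x : ℕ) / (b : ℚ)) =
      ∑ i ∈ range (m + 1), bernoulli i * (m.choose i : ℚ) * ((c : ℚ) / b) ^ (m - i) * (x : ℚ) ^ (m - i) := by
    intro x
    rw [bernoulli_eval]
    refine Finset.sum_congr rfl fun i _ => ?_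
    push_cast
    rw [show (c : ℚ) * x / b = (c / b) * x by ring, mul_pow]
    ring
  calc (b : ℚ) ^ (m - 1) * ∑ x ∈ range b, (Polynomial.bernoulli m).eval ((c * x : ℕ) / (b : ℚ))
      = ∑ i ∈ range (m + 1), (b : ℚ) ^ (m - 1) * (bernoulli i * (m.choose i : ℚ) * ((c : ℚ) / b) ^ (m - i)
          * ∑ x ∈ range b, (x : ℚ) ^ (m - i)) := by
        simp only [step1]
        rw [Finset.sum_comm, Finset.mul_sum]
        refine Finset.sum_congr rfl fun i _ => ?_
        rw [Finset.mul_sum, Finset.mul_sum]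
        exact (Finset.mul_sum _ _ _).symm
    _ = ∑ i ∈ range (m + 1), ∑ j ∈ range (m - i + 1),
          (b : ℚ) ^ (m - 1) * (bernoulli i * (m.choose i : ℚ) * ((c : ℚ) / b) ^ (m - i)
            * (bernoulli j * ((m - i + 1).choose j : ℚ) * (b : ℚ) ^ (m - i + 1 - j) / ((m - i : ℕ) + 1))) := by
        refine Finset.sum_congr rfl fun i _ => ?_
        rw [sum_range_pow, Finset.mul_sum, Finset.mul_sum]
    _ = Gsum m c b := by
        refine Finset.sum_congr rfl fun i hi => Finset.sum_congr rfl fun j hj => ?_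
        rw [Finset.mem_range] at hi hj
        have hi' : i ≤ m := by omega
        have hj' : j ≤ m - i := by omega
        have h1 : m - i + 1 = m + 1 - i := by omega
        have hpow : ((c : ℚ) / b) ^ (m - i) * ((b : ℚ) ^ (m - 1) * (b : ℚ) ^ (m + 1 - i - j)) =
            (c : ℚ) ^ (m - i) * (b : ℚ) ^ (m - j) := by
          rw [div_pow]
          rw [show (b : ℚ) ^ (m - 1) * (b : ℚ) ^ (m + 1 - i - j) = (b : ℚ) ^ (m - i) * (b : ℚ) ^ (m - j) by
            rw [← pow_add, ← pow_add]; congr 1; omega]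
          field_simp
        have hms : ((m - i : ℕ) : ℚ) + 1 ≠ 0 := by positivity
        have hm1 : ((m : ℚ) + 1) ≠ 0 := by positivity
        have hchoose : (m.choose i : ℚ) * ((m : ℚ) + 1) = ((m + 1).choose i : ℚ) * (((m - i : ℕ) : ℚ) + 1) := by
          have h := Nat.choose_mul_succ_eq m i
          have hcast : ((m.choose i * (m + 1) : ℕ) : ℚ) = (((m + 1).choose i * (m + 1 - i) : ℕ) : ℚ) := by
            exact_mod_cast congrArg (Nat.cast (R := ℚ)) h
          push_cast at hcast
          rw [show ((m + 1 - i : ℕ) : ℚ) = ((m - i : ℕ) : ℚ) + 1 by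
            rw [Nat.cast_sub (by omega : i ≤ m + 1), Nat.cast_sub hi']; push_cast; ring] at hcast
          linarith [hcast]
        have hdiv : (m.choose i : ℚ) / (((m - i : ℕ) : ℚ) + 1) = ((m + 1).choose i : ℚ) / ((m : ℚ) + 1) := by
          rw [div_eq_div_iff hms hm1]; linarith [hchoose]
        rw [h1]
        calc (b : ℚ) ^ (m - 1) * (bernoulli i * (m.choose i : ℚ) * ((c : ℚ) / b) ^ (m - i)
              * (bernoulli j * ((m + 1 - i).choose j : ℚ) * (b : ℚ) ^ (m + 1 - i - j) / ((m - i : ℕ) + 1)))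
            = (bernoulli i * bernoulli j * ((m + 1 - i).choose j : ℚ)) *
                (((c : ℚ) / b) ^ (m - i) * ((b : ℚ) ^ (m - 1) * (b : ℚ) ^ (m + 1 - i - j))) *
                ((m.choose i : ℚ) / (((m - i : ℕ) : ℚ) + 1)) := by ring
          _ = (bernoulli i * bernoulli j * ((m + 1 - i).choose j : ℚ)) *
                ((c : ℚ) ^ (m - i) * (b : ℚ) ^ (m - j)) *
                (((m + 1).choose i : ℚ) / ((m : ℚ) + 1)) := by rw [hpow, hdiv]
          _ = ((m + 1).choose i : ℚ) * ((m + 1 - i).choose j : ℚ) *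
                bernoulli i * bernoulli j * (c : ℚ) ^ (m - i) * (b : ℚ) ^ (m - j) / (m + 1) := by ring

lemma lemB (m b : ℕ) (hm : 1 ≤ m) : Gsum m 1 b = bernoulli m := by
  unfold Gsum
  rw [triangle_swap]
  simp only [Nat.cast_one]
  have key : ∀ i ∈ range (m + 1),
      ∑ j ∈ range (m - i + 1),
        ((m + 1).choose j : ℚ) * ((m + 1 - j).choose i : ℚ) *
          bernoulli j * bernoulli i * (1 : ℚ) ^ (m - j) * (b : ℚ) ^ (m - i) / (m + 1) =
      if i = m then bernoulli m else 0 := by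
    intro i hi
    rw [Finset.mem_range] at hi
    have hi' : i ≤ m := by omega
    have htrans : ∀ j ∈ range (m - i + 1),
        ((m + 1).choose j : ℚ) * ((m + 1 - j).choose i : ℚ) *
          bernoulli j * bernoulli i * (1 : ℚ) ^ (m - j) * (b : ℚ) ^ (m - i) / (m + 1) =
        (bernoulli i * (b : ℚ) ^ (m - i) * ((m + 1).choose i : ℚ) / (m + 1)) *
          (((m + 1 - i).choose j : ℚ) * bernoulli j) := by
      intro j hj
      rw [Finset.mem_range] at hj
      rw [coeff_sym m i j (by omega)]
      ring
    rw [Finset.sum_congr rfl htrans, ← Finset.mul_sum]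
    rw [show m - i + 1 = m + 1 - i by omega]
    rw [sum_bernoulli]
    by_cases hcase : i = m
    · subst hcase
      simp only [if_pos rfl, Nat.sub_self, pow_zero, mul_one, Nat.choose_succ_self_right]
      push_cast
      rw [mul_div_assoc, div_self (by positivity), mul_one,
        if_pos (show i + 1 - i = 1 by omega), mul_one]
    · rw [if_neg (by omega), if_neg hcase]
      ring
  rw [Finset.sum_congr rfl key, Finset.sum_ite_eq' (range (m + 1)) m fun _ => bernoulli m]
  rw [if_pos (Finset.self_mem_range_succ m)]
lemma lemC (m a b : ℕ) :
    ∑ i ∈ Finset.range (m + 1), ∑ j ∈ Finset.range (m - i + 1),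
        ((m + 1).choose i : ℚ) * ((m + 1 - i).choose j : ℚ) *
          bernoulli i * bernoulli j * (a : ℚ) ^ (m - j) * (b : ℚ) ^ (m - i) =
      ((m : ℚ) + 1) * Gsum m a b := by
  rw [triangle_swap]
  unfold Gsum
  rw [Finset.mul_sum]
  refine Finset.sum_congr rfl fun i hi => ?_
  rw [Finset.mul_sum]
  refine Finset.sum_congr rfl fun j hj => ?_
  rw [Finset.mem_range] at hi hj
  rw [coeff_sym m i j (by omega)]
  have hm1 : ((m : ℚ) + 1) ≠ 0 := by positivity
  rw [eq_comm, mul_comm ((m : ℚ) + 1), div_mul_cancel₀ _ hm1]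
  ring

lemma sum_NR (a b : ℕ) (ha : 2 ≤ a) (hb : 2 ≤ b) (hab : Nat.Coprime a b)
    (NR : Finset ℕ)
    (hNR : ∀ n : ℕ, n ∈ NR ↔ 0 < n ∧ ¬ ∃ x y : ℕ, n = a * x + b * y)
    (f : ℕ → ℚ) :
    ∑ n ∈ NR, f n = ∑ x ∈ Finset.Ico 1 b, ∑ k ∈ range (a * x / b), f (a * x % b + b * k) := by
  have hb0 : 0 < b := by omega
  haveI : NeZero b := ⟨by omega⟩
  -- modular inverse of a mod b
  obtain ⟨a', ha'⟩ : ∃ a', a * a' ≡ 1 [MOD b] := by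
    refine ⟨((a : ZMod b)⁻¹).val, ?_⟩
    have : ((a * ((a : ZMod b)⁻¹).val : ℕ) : ZMod b) = ((1 : ℕ) : ZMod b) := by
      push_cast
      rw [ZMod.natCast_val, ZMod.cast_id]
      exact ZMod.coe_mul_inv_eq_one a hab
    exact (ZMod.natCast_eq_natCast_iff _ _ _).mp this
  have key1 : ∀ n : ℕ, a * (a' * n % b) ≡ n [MOD b] := by
    intro n
    calc a * (a' * n % b) ≡ a * (a' * n) [MOD b] := Nat.ModEq.mul_left a (Nat.mod_modEq _ b)
      _ = a * a' * n := by ring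
      _ ≡ 1 * n [MOD b] := Nat.ModEq.mul_right n ha'
      _ = n := one_mul n
  -- membership of the "backward" values in NR
  have mem_back : ∀ x k : ℕ, 1 ≤ x → x < b → k < a * x / b → a * x % b + b * k ∈ NR := by
    intro x k hx1 hx2 hk
    rw [hNR]
    have hlt : a * x % b + b * k + b ≤ a * x := by
      have e1 : a * x % b + b * (a * x / b) = a * x := Nat.mod_add_div _ _
      have h2 : b * (k + 1) ≤ b * (a * x / b) := Nat.mul_le_mul_left b hk
      have h3 : b * (k + 1) = b * k + b := by ring
      linarith
    constructor
    · -- positivity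
      rcases Nat.eq_zero_or_pos (a * x % b) with h0 | h0
      · exfalso
        have hdvd : b ∣ a * x := Nat.dvd_of_mod_eq_zero h0
        have : b ∣ x := (Nat.Coprime.dvd_of_dvd_mul_left (Nat.Coprime.symm hab) hdvd)
        have := Nat.le_of_dvd (by omega) this
        omega
      · omega
    · rintro ⟨u, v, huv⟩
      -- n ≡ a*x [MOD b] and n = a*u + b*v ≡ a*u, cancel a
      have hmeq : u ≡ x [MOD b] := by
        apply Nat.ModEq.cancel_left_of_coprime hab.symm
        calc a * u ≡ a * u + b * v [MOD b] := (Nat.add_mul_mod_self_left (a * u) b v).symm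
          _ = a * x % b + b * k := huv.symm
          _ ≡ a * x % b [MOD b] := Nat.add_mul_mod_self_left (a * x % b) b k
          _ ≡ a * x [MOD b] := Nat.mod_modEq _ b
      have hux : x ≤ u := by
        have h4 : u % b = x % b := hmeq
        rcases lt_or_ge u b with h | h
        · rw [Nat.mod_eq_of_lt h, Nat.mod_eq_of_lt hx2] at h4; omega
        · omega
      have h5 : a * x ≤ a * u := Nat.mul_le_mul_left a hux
      have h6 : a * u ≤ a * u + b * v := Nat.le_add_right _ _
      omega
  -- facts about the "forward" map on elements of NR
  have mem_fwd : ∀ n ∈ NR, 1 ≤ a' * n % b ∧ a' * n % b < b ∧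
      n / b < a * (a' * n % b) / b ∧ a * (a' * n % b) % b + b * (n / b) = n := by
    intro n hn
    rw [hNR] at hn
    obtain ⟨hn0, hnr⟩ := hn
    set x := a' * n % b with hxdef
    have hx2 : x < b := Nat.mod_lt _ hb0
    have hax : a * x % b = n % b := key1 n
    have hx1 : 1 ≤ x := by
      rcases Nat.eq_zero_or_pos x with h0 | h0
      · exfalso
        have hmm : n % b = 0 := by
          have h1 : a * x % b = n % b := hax
          rw [h0, Nat.mul_zero, Nat.zero_mod] at h1
          omega
        have hbn : b ∣ n := Nat.dvd_of_mod_eq_zero hmm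
        exact hnr ⟨0, n / b, by rw [Nat.mul_zero, Nat.zero_add, Nat.mul_div_cancel' hbn]⟩
      · exact h0
    have hsum : a * x % b + b * (n / b) = n := by
      rw [hax]; exact Nat.mod_add_div _ _
    refine ⟨hx1, hx2, ?_, hsum⟩
    by_contra hcon
    push_neg at hcon
    -- then n is representable: n = a*x + b*(n/b - a*x/b)
    apply hnr
    refine ⟨x, n / b - a * x / b, ?_⟩
    have hv : b * (n / b) = b * (a * x / b) + b * (n / b - a * x / b) := by
      rw [← Nat.mul_add]
      congr 1
      exact (Nat.add_sub_cancel' hcon).symm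
    calc n = a * x % b + b * (n / b) := hsum.symm
      _ = a * x % b + (b * (a * x / b) + b * (n / b - a * x / b)) := by rw [hv]
      _ = (a * x % b + b * (a * x / b)) + b * (n / b - a * x / b) := by ring
      _ = a * x + b * (n / b - a * x / b) := by rw [Nat.mod_add_div]
  -- now the bijection
  rw [Finset.sum_sigma']
  refine Finset.sum_nbij' (fun n => ⟨a' * n % b, n / b⟩)
    (fun p => a * p.1 % b + b * p.2) ?_ ?_ ?_ ?_ ?_
  · intro n hn
    obtain ⟨h1, h2, h3, _⟩ := mem_fwd n hn
    simp only [Finset.mem_sigma, Finset.mem_Ico, Finset.mem_range]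
    exact ⟨⟨h1, h2⟩, h3⟩
  · intro p hp
    simp only [Finset.mem_sigma, Finset.mem_Ico, Finset.mem_range] at hp
    exact mem_back p.1 p.2 hp.1.1 hp.1.2 hp.2
  · intro n hn
    obtain ⟨_, _, _, h4⟩ := mem_fwd n hn
    exact h4
  · intro p hp
    obtain ⟨x, k⟩ := p
    simp only [Finset.mem_sigma, Finset.mem_Ico, Finset.mem_range] at hp
    obtain ⟨⟨hx1, hx2⟩, hk⟩ := hp
    have hr : a * x % b < b := Nat.mod_lt _ hb0
    have hdiv : (a * x % b + b * k) / b = k := by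
      rw [Nat.add_mul_div_left _ _ hb0, Nat.div_eq_of_lt hr, Nat.zero_add]
    have hmod : a' * (a * x % b + b * k) % b = x := by
      have step : a' * (a * x % b + b * k) ≡ x [MOD b] := by
        calc a' * (a * x % b + b * k)
            ≡ a' * (a * x % b) [MOD b] := by
              apply Nat.ModEq.mul_left a'
              exact Nat.add_mul_mod_self_left (a * x % b) b k
          _ ≡ a' * (a * x) [MOD b] := Nat.ModEq.mul_left a' (Nat.mod_modEq _ b)
          _ = a * a' * x := by ring
          _ ≡ 1 * x [MOD b] := Nat.ModEq.mul_right x ha'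
          _ = x := one_mul _
      have hh : a' * (a * x % b + b * k) % b = x % b := step
      rwa [Nat.mod_eq_of_lt hx2] at hh
    show (⟨a' * (a * x % b + b * k) % b, (a * x % b + b * k) / b⟩ : (_ : ℕ) × ℕ) = ⟨x, k⟩
    rw [hmod, hdiv]
  · intro n hn
    obtain ⟨_, _, _, h4⟩ := mem_fwd n hn
    rw [h4]

lemma perm_sum (a b : ℕ) (hb0 : 0 < b) (hab : Nat.Coprime a b) (g : ℕ → ℚ) :
    ∑ x ∈ range b, g (a * x % b) = ∑ x ∈ range b, g x := by
  haveI : NeZero b := ⟨hb0.ne'⟩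
  obtain ⟨a', ha'⟩ : ∃ a', a * a' ≡ 1 [MOD b] := by
    refine ⟨((a : ZMod b)⁻¹).val, ?_⟩
    have : ((a * ((a : ZMod b)⁻¹).val : ℕ) : ZMod b) = ((1 : ℕ) : ZMod b) := by
      push_cast
      rw [ZMod.natCast_val, ZMod.cast_id]
      exact ZMod.coe_mul_inv_eq_one a hab
    exact (ZMod.natCast_eq_natCast_iff _ _ _).mp this
  refine Finset.sum_nbij' (fun x => a * x % b) (fun r => a' * r % b) ?_ ?_ ?_ ?_ ?_
  · intro x _; exact Finset.mem_range.mpr (Nat.mod_lt _ hb0)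
  · intro r _; exact Finset.mem_range.mpr (Nat.mod_lt _ hb0)
  · intro x hx
    have step : a' * (a * x % b) ≡ x [MOD b] :=
      calc a' * (a * x % b) ≡ a' * (a * x) [MOD b] := Nat.ModEq.mul_left a' (Nat.mod_modEq _ b)
        _ = a * a' * x := by ring
        _ ≡ 1 * x [MOD b] := Nat.ModEq.mul_right x ha'
        _ = x := one_mul x
    have hh : a' * (a * x % b) % b = x % b := step
    rwa [Nat.mod_eq_of_lt (Finset.mem_range.mp hx)] at hh
  · intro r hr
    have step : a * (a' * r % b) ≡ r [MOD b] :=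
      calc a * (a' * r % b) ≡ a * (a' * r) [MOD b] := Nat.ModEq.mul_left a (Nat.mod_modEq _ b)
        _ = a * a' * r := by ring
        _ ≡ 1 * r [MOD b] := Nat.ModEq.mul_right r ha'
        _ = r := one_mul r
    have hh : a * (a' * r % b) % b = r % b := step
    rwa [Nat.mod_eq_of_lt (Finset.mem_range.mp hr)] at hh
  · intro x _; rfl

/-- Rödseth's formula: for coprime `a, b ≥ 2` and `m ≥ 1`,
`S_{m−1} = (1/(m(m+1)))·∑_{i=0}^{m} ∑_{j=0}^{m−i} C(m+1,i)·C(m+1−i,j)·B_i·B_j·a^{m−j}·b^{m−i} − B_m/m`,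
where `B_i` is the `i`-th Bernoulli number (with `B₁ = −1/2`). -/
theorem rodseth_formula
    (a b : ℕ) (ha : 2 ≤ a) (hb : 2 ≤ b) (hab : Nat.Coprime a b)
    (NR : Finset ℕ)
    (hNR : ∀ n : ℕ, n ∈ NR ↔ 0 < n ∧ ¬ ∃ x y : ℕ, n = a * x + b * y)
    (m : ℕ) (hm : 1 ≤ m) :
    ∑ n ∈ NR, (n : ℚ) ^ (m - 1) =
      (1 / ((m : ℚ) * ((m : ℚ) + 1))) *
        ∑ i ∈ Finset.range (m + 1), ∑ j ∈ Finset.range (m - i + 1),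
          ((m + 1).choose i : ℚ) * ((m + 1 - i).choose j : ℚ) *
            bernoulli i * bernoulli j * (a : ℚ) ^ (m - j) * (b : ℚ) ^ (m - i)
      - bernoulli m / (m : ℚ) := by
  have hb0 : 0 < b := by omega
  have hbQ : (b : ℚ) ≠ 0 := Nat.cast_ne_zero.mpr hb0.ne'
  have hmQ : (m : ℚ) ≠ 0 := Nat.cast_ne_zero.mpr (by omega)
  have hm1 : ((m : ℚ) + 1) ≠ 0 := by positivity
  set S := ∑ n ∈ NR, (n : ℚ) ^ (m - 1) with hS
  -- step 1
  have step1 : S = ∑ x ∈ Finset.Ico 1 b, ∑ k ∈ range (a * x / b),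
      ((a * x % b + b * k : ℕ) : ℚ) ^ (m - 1) :=
    sum_NR a b ha hb hab NR hNR (fun n => (n : ℚ) ^ (m - 1))
  -- step 2
  have step2 : ∀ x : ℕ, (m : ℚ) * ∑ k ∈ range (a * x / b), ((a * x % b + b * k : ℕ) : ℚ) ^ (m - 1)
      = (b : ℚ) ^ (m - 1) * ((Polynomial.bernoulli m).eval (((a * x : ℕ) : ℚ) / b)
        - (Polynomial.bernoulli m).eval (((a * x % b : ℕ) : ℚ) / b)) := by
    intro x
    have hcast : ∀ k ∈ range (a * x / b), ((a * x % b + b * k : ℕ) : ℚ) ^ (m - 1) =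
        (b : ℚ) ^ (m - 1) * ((((a * x % b : ℕ) : ℚ)) / b + k) ^ (m - 1) := by
      intro k _
      rw [← mul_pow]
      congr 1
      push_cast
      field_simp
    rw [Finset.sum_congr rfl hcast, ← Finset.mul_sum, mul_left_comm, tele]
    have hzK : (((a * x % b : ℕ) : ℚ)) / b + ((a * x / b : ℕ) : ℚ) = ((a * x : ℕ) : ℚ) / b := by
      rw [div_add' _ _ _ hbQ]
      congr 1
      rw [show ((a * x : ℕ) : ℚ) = ((a * x % b + b * (a * x / b) : ℕ) : ℚ) by rw [Nat.mod_add_div]]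
      push_cast
      ring
    rw [hzK]
  -- step 3: multiply step1 by m and use step2
  have step3 : (m : ℚ) * S = (b : ℚ) ^ (m - 1) *
      ((∑ x ∈ Finset.Ico 1 b, (Polynomial.bernoulli m).eval (((a * x : ℕ) : ℚ) / b))
        - ∑ x ∈ Finset.Ico 1 b, (Polynomial.bernoulli m).eval (((a * x % b : ℕ) : ℚ) / b)) := by
    rw [step1, Finset.mul_sum]
    rw [Finset.sum_congr rfl (fun x _ => step2 x)]
    rw [← Finset.mul_sum, Finset.sum_sub_distrib]
  -- extend to range b
  have step4 : (m : ℚ) * S = (b : ℚ) ^ (m - 1) *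
      ((∑ x ∈ range b, (Polynomial.bernoulli m).eval (((a * x : ℕ) : ℚ) / b))
        - ∑ x ∈ range b, (Polynomial.bernoulli m).eval (((a * x % b : ℕ) : ℚ) / b)) := by
    rw [step3]
    congr 1
    have e1 : ∑ x ∈ range b, (Polynomial.bernoulli m).eval (((a * x : ℕ) : ℚ) / b)
        = (Polynomial.bernoulli m).eval (((a * 0 : ℕ) : ℚ) / b)
          + ∑ x ∈ Finset.Ico 1 b, (Polynomial.bernoulli m).eval (((a * x : ℕ) : ℚ) / b) :=
      Finset.sum_range_eq_add_Ico _ hb0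
    have e2 : ∑ x ∈ range b, (Polynomial.bernoulli m).eval (((a * x % b : ℕ) : ℚ) / b)
        = (Polynomial.bernoulli m).eval (((a * 0 % b : ℕ) : ℚ) / b)
          + ∑ x ∈ Finset.Ico 1 b, (Polynomial.bernoulli m).eval (((a * x % b : ℕ) : ℚ) / b) :=
      Finset.sum_range_eq_add_Ico _ hb0
    rw [e1, e2]
    have : (a * 0 % b : ℕ) = (a * 0 : ℕ) := by simp
    rw [this]
    ring
  -- step 5: permutation for the second sum
  have step5 : ∑ x ∈ range b, (Polynomial.bernoulli m).eval (((a * x % b : ℕ) : ℚ) / b)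
      = ∑ x ∈ range b, (Polynomial.bernoulli m).eval (((1 * x : ℕ) : ℚ) / b) := by
    have := perm_sum a b hb0 hab (fun r => (Polynomial.bernoulli m).eval ((r : ℚ) / b))
    simpa using this
  -- step 6: apply lemA twice
  have step6 : (m : ℚ) * S = Gsum m a b - bernoulli m := by
    rw [step4, step5, mul_sub, lemA m a b hb0 hm, lemA m 1 b hb0 hm, lemB m b hm]
  -- final
  rw [lemC m a b]
  have hfinal : S = (Gsum m a b - bernoulli m) / m := by
    rw [eq_div_iff hmQ]; linarith [step6]
  rw [hfinal]
  field_simp
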